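/- Let F have characteristic zero or characteristic > m−1, let A = F[x]/(x^m), B = F[y]/(y^m), T = F[z]/(z^t) with 1 < t < m, π_A(x) = z, π_B(y) = z, and orientations ∫_A : x^{m−1} ↦ 1, ∫_B : y^{m−1} ↦ 1, ∫_T : z^{t−1} ↦ 1 (so τ_A = x^{m−t}, τ_B = y^{m−t} after adjusting the sign of ∫_B). Then the connected sum C = A #_T B ≅ F[z_1,z_2]/(z_1^{m−t}, z_1^t z_2 − z_2^2) (with deg z_1 = 1, deg z_2 = t) has the weak Lefschetz property if and only if t ≠ m/2, and C never has the strong Lefschetz property. -/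
import Mathlib


open MvPolynomial

/-- The strong Lefschetz property for a graded algebra with graded pieces `𝒜`. -/
def SLPFor {F R : Type} [Field F] [CommRing R] [Algebra F R]
    (𝒜 : ℕ → Submodule F R) : Prop :=
  ∃ ℓ ∈ 𝒜 1, ∀ i j : ℕ,
    (∀ x ∈ 𝒜 i, ∀ y ∈ 𝒜 i, ℓ ^ j * x = ℓ ^ j * y → x = y) ∨
    (∀ z ∈ 𝒜 (i + j), ∃ x ∈ 𝒜 i, ℓ ^ j * x = z)

/-- The weak Lefschetz property for a graded algebra with graded pieces `𝒜`. -/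
def WLPFor {F R : Type} [Field F] [CommRing R] [Algebra F R]
    (𝒜 : ℕ → Submodule F R) : Prop :=
  ∃ ℓ ∈ 𝒜 1, ∀ i : ℕ,
    (∀ x ∈ 𝒜 i, ∀ y ∈ 𝒜 i, ℓ * x = ℓ * y → x = y) ∨
    (∀ z ∈ 𝒜 (i + 1), ∃ x ∈ 𝒜 i, ℓ * x = z)

set_option synthInstance.maxHeartbeats 1000000
set_option maxHeartbeats 1000000

namespace ConnectedSumAux

variable {F : Type} [Field F]

/-- Weighted degree with weights `![1, t]`. -/
lemma wt (t : ℕ) (s : Fin 2 →₀ ℕ) :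
    (Finsupp.weight ![1, t]) s = s 0 + s 1 * t := by
  rw [Finsupp.weight_apply, Finsupp.sum_fintype]
  · simp [Fin.sum_univ_two, mul_comm]
  · intro i; exact zero_smul _ _

lemma pair_apply0 (x y : ℕ) :
    ((Finsupp.single (0 : Fin 2) x + Finsupp.single 1 y : Fin 2 →₀ ℕ)) 0 = x := by
  simp [Finsupp.single_apply]

lemma pair_apply1 (x y : ℕ) :
    ((Finsupp.single (0 : Fin 2) x + Finsupp.single 1 y : Fin 2 →₀ ℕ)) 1 = y := by
  simp [Finsupp.single_apply]

lemma pair_le {u v x y : ℕ} :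
    (Finsupp.single (0 : Fin 2) u + Finsupp.single 1 v) ≤
      (Finsupp.single 0 x + Finsupp.single 1 y) ↔ u ≤ x ∧ v ≤ y := by
  rw [Finsupp.le_def]
  constructor
  · intro h
    exact ⟨by simpa [pair_apply0] using h 0, by simpa [pair_apply1] using h 1⟩
  · rintro ⟨h1, h2⟩ i
    fin_cases i
    · simpa [pair_apply0] using h1
    · simpa [pair_apply1] using h2

lemma pair_sub (u v x y : ℕ) :
    (Finsupp.single (0 : Fin 2) x + Finsupp.single 1 y) -
      (Finsupp.single 0 u + Finsupp.single 1 v) =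
      Finsupp.single 0 (x - u) + Finsupp.single 1 (y - v) := by
  ext i
  fin_cases i
  · simp [Finsupp.tsub_apply, pair_apply0]
  · simp [Finsupp.tsub_apply, pair_apply1]

lemma single0_eq_pair (j : ℕ) :
    Finsupp.single (0 : Fin 2) j = Finsupp.single 0 j + Finsupp.single 1 0 := by
  simp

lemma X0_pow_eq (a : ℕ) :
    (X 0 : MvPolynomial (Fin 2) F) ^ a = monomial (Finsupp.single 0 a) 1 :=
  X_pow_eq_monomial

lemma X0_pow_X1_eq (a : ℕ) :
    (X 0 : MvPolynomial (Fin 2) F) ^ a * X 1 =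
      monomial (Finsupp.single 0 a + Finsupp.single 1 1) 1 := by
  rw [X0_pow_eq, show (X 1 : MvPolynomial (Fin 2) F) = monomial (Finsupp.single 1 1) 1 from rfl,
    monomial_mul, mul_one]

lemma g2_eq (t : ℕ) :
    (X 0 : MvPolynomial (Fin 2) F) ^ t * X 1 - X 1 ^ 2 =
      monomial (Finsupp.single 0 t + Finsupp.single 1 1) 1 -
      monomial (Finsupp.single 1 2) 1 := by
  rw [X0_pow_X1_eq, X_pow_eq_monomial]



section Ideal

variable (m t : ℕ)

/-- The defining ideal. -/
noncomputable abbrev Jd (F : Type) [Field F] : Ideal (MvPolynomial (Fin 2) F) :=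
  Ideal.span {(X 0 : MvPolynomial (Fin 2) F) ^ (m - t),
    (X 0 : MvPolynomial (Fin 2) F) ^ t * X 1 - X 1 ^ 2}

lemma g1_mem : (X 0 : MvPolynomial (Fin 2) F) ^ (m - t) ∈ Jd m t F :=
  Ideal.subset_span (by simp)

lemma g2_mem : (X 0 : MvPolynomial (Fin 2) F) ^ t * X 1 - X 1 ^ 2 ∈ Jd m t F :=
  Ideal.subset_span (by simp)

lemma pow_mem {i : ℕ} (h : m - t ≤ i) : (X 0 : MvPolynomial (Fin 2) F) ^ i ∈ Jd m t F := by
  have : (X 0 : MvPolynomial (Fin 2) F) ^ i = X 0 ^ (i - (m - t)) * X 0 ^ (m - t) := by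
    rw [← pow_add]; congr 1; omega
  rw [this]
  exact Ideal.mul_mem_left _ _ (g1_mem m t)

lemma pow_X1_mem {i : ℕ} (h : m - t ≤ i) :
    (X 0 : MvPolynomial (Fin 2) F) ^ i * X 1 ∈ Jd m t F :=
  Ideal.mul_mem_right _ _ (pow_mem m t h)

lemma keyK (b : ℕ) :
    (X 1 : MvPolynomial (Fin 2) F) ^ (b + 1) - X 0 ^ (b * t) * X 1 ∈ Jd m t F := by
  induction b with
  | zero => simpa using (Jd m t F).zero_mem
  | succ b ih =>
    have h := (Jd m t F).sub_mem ((Jd m t F).mul_mem_left (X 1) ih)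
      ((Jd m t F).mul_mem_left (X 0 ^ (b * t)) (g2_mem m t))
    have e : (X 1 : MvPolynomial (Fin 2) F) ^ (b + 1 + 1) - X 0 ^ ((b + 1) * t) * X 1 =
        X 1 * (X 1 ^ (b + 1) - X 0 ^ (b * t) * X 1) -
        X 0 ^ (b * t) * (X 0 ^ t * X 1 - X 1 ^ 2) := by
      rw [show (b + 1) * t = b * t + t from by ring, pow_add]
      ring
    rw [e]; exact h

lemma L1_vanish {j : ℕ} (hj : j < m - t) {p : MvPolynomial (Fin 2) F}
    (hp : p ∈ Jd m t F) : coeff (Finsupp.single 0 j) p = 0 := by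
  obtain ⟨f, g, hfg⟩ := Ideal.mem_span_pair.mp hp
  rw [← hfg, coeff_add]
  have h1 : coeff (Finsupp.single 0 j) (f * (X 0 : MvPolynomial (Fin 2) F) ^ (m - t)) = 0 := by
    rw [X0_pow_eq, coeff_mul_monomial', if_neg]
    intro hle
    have := Finsupp.le_def.mp hle 0
    simp [Finsupp.single_apply] at this
    omega
  have h2 : coeff (Finsupp.single 0 j)
      (g * ((X 0 : MvPolynomial (Fin 2) F) ^ t * X 1 - X 1 ^ 2)) = 0 := by
    rw [g2_eq, mul_sub, coeff_sub, coeff_mul_monomial', coeff_mul_monomial', if_neg, if_neg]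
    · simp
    · intro hle
      have := Finsupp.le_def.mp hle 1
      simp [Finsupp.single_apply] at this
    · intro hle
      have := Finsupp.le_def.mp hle 1
      simp [pair_apply1, Finsupp.single_apply] at this
  rw [h1, h2, add_zero]

/-- The second coefficient functional (coefficient of the normal form `z₁^{j-t} z₂`). -/
noncomputable def L2 (j : ℕ) (p : MvPolynomial (Fin 2) F) : F :=
  ∑ β ∈ Finset.range (j + 2), if 1 ≤ β ∧ t * β ≤ j
    then coeff (Finsupp.single 0 (j - t * β) + Finsupp.single 1 β) p else 0

lemma L2_add (j : ℕ) (p q : MvPolynomial (Fin 2) F) :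
    L2 t j (p + q) = L2 t j p + L2 t j q := by
  unfold L2
  rw [← Finset.sum_add_distrib]
  refine Finset.sum_congr rfl fun β _ => ?_
  split <;> simp [coeff_add]

lemma L2_sub (j : ℕ) (p q : MvPolynomial (Fin 2) F) :
    L2 t j (p - q) = L2 t j p - L2 t j q := by
  unfold L2
  rw [← Finset.sum_sub_distrib]
  refine Finset.sum_congr rfl fun β _ => ?_
  split <;> simp [coeff_sub]

lemma L2_smul (j : ℕ) (c : F) (p : MvPolynomial (Fin 2) F) :
    L2 t j (c • p) = c * L2 t j p := by
  unfold L2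
  rw [Finset.mul_sum]
  refine Finset.sum_congr rfl fun β _ => ?_
  split <;> simp [coeff_smul]

lemma L2_vanish {j : ℕ} (ht : 1 ≤ t) (htm : t ≤ m) (hj : j < m)
    {p : MvPolynomial (Fin 2) F} (hp : p ∈ Jd m t F) : L2 t j p = 0 := by
  obtain ⟨f, g, hfg⟩ := Ideal.mem_span_pair.mp hp
  rw [← hfg, L2_add]
  have h1 : L2 t j (f * (X 0 : MvPolynomial (Fin 2) F) ^ (m - t)) = 0 := by
    unfold L2
    apply Finset.sum_eq_zero
    intro β _
    split_ifs with hc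
    · rw [X0_pow_eq, coeff_mul_monomial', if_neg]
      intro hle
      have := Finsupp.le_def.mp hle 0
      rw [pair_apply0] at this
      simp [Finsupp.single_apply] at this
      have hb : t ≤ t * β := Nat.le_mul_of_pos_right _ (by omega)
      omega
    · rfl
  have h2 : L2 t j (g * ((X 0 : MvPolynomial (Fin 2) F) ^ t * X 1 - X 1 ^ 2)) = 0 := by
    rw [g2_eq, mul_sub, L2_sub]
    have hA : ∀ β : ℕ,
        (if 1 ≤ β ∧ t * β ≤ j then
          coeff (Finsupp.single 0 (j - t * β) + Finsupp.single 1 β)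
            (g * monomial (Finsupp.single 0 t + Finsupp.single 1 1) 1) else 0) =
        (if 1 ≤ β ∧ t * (β + 1) ≤ j then
          coeff (Finsupp.single 0 (j - t * (β + 1)) + Finsupp.single 1 (β - 1)) g else 0) := by
      intro β
      have e1 : t * (β + 1) = t * β + t := by ring
      rw [coeff_mul_monomial']
      by_cases h : 1 ≤ β ∧ t * (β + 1) ≤ j
      · rw [if_pos ⟨h.1, by omega⟩, if_pos (pair_le.mpr ⟨by omega, h.1⟩), if_pos h,
          pair_sub, mul_one, show j - t * β - t = j - t * (β + 1) from by omega]
      · split_ifs with hg1 hg2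
        · exfalso
          obtain ⟨hu, hv⟩ := pair_le.mp hg2
          omega
        · rfl
        · rfl
    have hB : ∀ β : ℕ,
        (if 1 ≤ β ∧ t * β ≤ j then
          coeff (Finsupp.single 0 (j - t * β) + Finsupp.single 1 β)
            (g * monomial (Finsupp.single 1 2) 1) else 0) =
        (if 2 ≤ β ∧ t * β ≤ j then
          coeff (Finsupp.single 0 (j - t * β) + Finsupp.single 1 (β - 2)) g else 0) := by
      intro β
      rw [show (Finsupp.single (1 : Fin 2) 2 : Fin 2 →₀ ℕ) =
        Finsupp.single 0 0 + Finsupp.single 1 2 from by simp, coeff_mul_monomial']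
      by_cases h : 2 ≤ β ∧ t * β ≤ j
      · rw [if_pos ⟨by omega, h.2⟩, if_pos (pair_le.mpr ⟨by omega, by omega⟩), if_pos h,
          pair_sub, mul_one, Nat.sub_zero]
      · split_ifs with hg1 hg2
        · exfalso
          obtain ⟨hu, hv⟩ := pair_le.mp hg2
          omega
        · rfl
        · rfl
    unfold L2
    rw [Finset.sum_congr rfl fun β _ => hA β, Finset.sum_congr rfl fun β _ => hB β]
    rw [sub_eq_zero]
    have hlast : (if 1 ≤ j + 1 ∧ t * (j + 1 + 1) ≤ j then
        coeff (Finsupp.single 0 (j - t * (j + 1 + 1)) + Finsupp.single 1 (j + 1 - 1)) g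
        else 0) = 0 := by
      rw [if_neg]
      intro h
      have := Nat.le_mul_of_pos_left (j + 1 + 1) (show 0 < t by omega)
      omega
    have hzero : (if 2 ≤ 0 ∧ t * 0 ≤ j then
        coeff (Finsupp.single 0 (j - t * 0) + Finsupp.single 1 (0 - 2)) g else 0) = 0 := by
      rw [if_neg]; omega
    rw [Finset.sum_range_succ _ (j + 1), hlast, add_zero]
    conv_rhs => rw [Finset.sum_range_succ' _ (j + 1)]
    rw [hzero, add_zero]
    refine Finset.sum_congr rfl fun β _ => ?_
    have e1 : t * (β + 1) = t * β + t := by ring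
    by_cases h : 1 ≤ β ∧ t * (β + 1) ≤ j
    · rw [if_pos h, if_pos ⟨by omega, h.2⟩, show β + 1 - 2 = β - 1 from by omega]
    · rw [if_neg h, if_neg (by omega)]
  rw [h1, h2, add_zero]

lemma L1_u (j : ℕ) : coeff (Finsupp.single 0 j) ((X 0 : MvPolynomial (Fin 2) F) ^ j) = 1 := by
  rw [X0_pow_eq, coeff_monomial, if_pos rfl]

lemma L1_v (j k : ℕ) :
    coeff (Finsupp.single 0 j) ((X 0 : MvPolynomial (Fin 2) F) ^ k * X 1) = 0 := by
  rw [X0_pow_X1_eq, coeff_monomial, if_neg]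
  intro h
  have := DFunLike.congr_fun h 1
  rw [pair_apply1] at this
  simp [Finsupp.single_apply] at this

lemma L2_u (j : ℕ) : L2 t j ((X 0 : MvPolynomial (Fin 2) F) ^ j) = 0 := by
  unfold L2
  apply Finset.sum_eq_zero
  intro β _
  split_ifs with h
  · rw [X0_pow_eq, coeff_monomial, if_neg]
    intro he
    have := DFunLike.congr_fun he 1
    rw [pair_apply1] at this
    simp [Finsupp.single_apply] at this
    omega
  · rfl

lemma L2_v {j : ℕ} (ht : 1 ≤ t) (htj : t ≤ j) :
    L2 t j ((X 0 : MvPolynomial (Fin 2) F) ^ (j - t) * X 1) = 1 := by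
  rw [X0_pow_X1_eq]
  unfold L2
  rw [Finset.sum_eq_single_of_mem 1 (by simp)]
  · rw [if_pos ⟨le_rfl, by omega⟩, mul_one t, coeff_monomial, if_pos rfl]
  · intro β _ hβ
    split_ifs with h
    · rw [coeff_monomial, if_neg]
      intro he
      have := DFunLike.congr_fun he 1
      rw [pair_apply1, pair_apply1] at this
      omega
    · rfl

lemma poly_indep {j : ℕ} (ht : 1 ≤ t) (htm : t ≤ m) (hj : j < m) (c d : F)
    (h : c • (X 0 : MvPolynomial (Fin 2) F) ^ j + d • (X 0 ^ (j - t) * X 1) ∈ Jd m t F) :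
    (j < m - t → c = 0) ∧ (t ≤ j → d = 0) := by
  constructor
  · intro hj2
    have h1 := L1_vanish m t hj2 h
    rw [coeff_add, coeff_smul, coeff_smul, L1_u, L1_v] at h1
    simpa using h1
  · intro htj
    have h2 := L2_vanish m t ht htm hj h
    rw [L2_add, L2_smul, L2_smul, L2_u, L2_v t ht htj] at h2
    simpa using h2

end Ideal



lemma mk_smul (J : Ideal (MvPolynomial (Fin 2) F)) (r : F) (q : MvPolynomial (Fin 2) F) :
    Ideal.Quotient.mk J (r • q) = r • Ideal.Quotient.mk J q := by
  rw [← Ideal.Quotient.mkₐ_eq_mk F J]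
  exact map_smul (Ideal.Quotient.mkₐ F J) r q

lemma mono_red (m t : ℕ) (ht : 1 ≤ t) (i : ℕ) (s : Fin 2 →₀ ℕ)
    (hs : s 0 + s 1 * t = i) (r : F) :
    Ideal.Quotient.mk (Jd m t F) (monomial s r) =
      if s 1 = 0 then r • Ideal.Quotient.mk (Jd m t F) ((X 0 : MvPolynomial (Fin 2) F) ^ i)
      else r • Ideal.Quotient.mk (Jd m t F) ((X 0 : MvPolynomial (Fin 2) F) ^ (i - t) * X 1) := by
  obtain ⟨a0, ha0⟩ : ∃ a0, s 0 = a0 := ⟨s 0, rfl⟩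
  by_cases h : s 1 = 0
  · rw [if_pos h]
    have h1 : s 1 * t = 0 := by rw [h]; exact zero_mul t
    have h0 : a0 = i := by omega
    have hs0 : s = Finsupp.single 0 i := by
      ext a
      fin_cases a
      · simpa [Finsupp.single_apply] using (by omega : s 0 = i)
      · simp [Finsupp.single_apply, h]
    rw [hs0, ← mk_smul, X0_pow_eq, smul_monomial, smul_eq_mul, mul_one]
  · rw [if_neg h]
    obtain ⟨b, hb⟩ := Nat.exists_eq_succ_of_ne_zero h
    have hs0 : s = Finsupp.single 0 a0 + Finsupp.single 1 (b + 1) := by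
      ext a
      fin_cases a
      · simpa [pair_apply0] using ha0
      · simpa [pair_apply1] using hb
    have hmono : monomial s r = r • ((X 0 : MvPolynomial (Fin 2) F) ^ a0 * X 1 ^ (b + 1)) := by
      rw [X0_pow_eq, show (X 1 : MvPolynomial (Fin 2) F) ^ (b+1) =
        monomial (Finsupp.single 1 (b+1)) 1 from X_pow_eq_monomial, monomial_mul,
        smul_monomial, mul_one, smul_eq_mul, mul_one, hs0]
    rw [hmono, mk_smul]
    congr 1
    rw [Ideal.Quotient.eq]
    have key : (X 0 : MvPolynomial (Fin 2) F) ^ a0 *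
        (X 1 ^ (b + 1) - X 0 ^ (b * t) * X 1) ∈ Jd m t F :=
      Ideal.mul_mem_left _ _ (keyK m t b)
    have e : (X 0 : MvPolynomial (Fin 2) F) ^ a0 * X 1 ^ (b + 1) - X 0 ^ (i - t) * X 1 =
        X 0 ^ a0 * (X 1 ^ (b + 1) - X 0 ^ (b * t) * X 1) := by
      have e2 : i - t = a0 + b * t := by
        have hsb : s 1 = b + 1 := hb
        have e3 : s 1 * t = (b + 1) * t := by rw [hsb]
        have e4 : (b + 1) * t = b * t + t := by ring
        omega
      rw [e2, pow_add]
      ring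
    rw [e]
    exact key

lemma reduce (m t : ℕ) (ht : 1 ≤ t) (i : ℕ) (p : MvPolynomial (Fin 2) F)
    (hp : p.IsWeightedHomogeneous ![1, t] i) :
    ∃ c d : F, Ideal.Quotient.mk (Jd m t F) p =
      c • Ideal.Quotient.mk (Jd m t F) ((X 0 : MvPolynomial (Fin 2) F) ^ i) +
      d • Ideal.Quotient.mk (Jd m t F) ((X 0 : MvPolynomial (Fin 2) F) ^ (i - t) * X 1) ∧
      (i < t → d = 0) := by
  have hdeg : ∀ s ∈ p.support, s 0 + s 1 * t = i := by
    intro s hs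
    have := hp (mem_support_iff.mp hs)
    rw [wt] at this
    exact this
  refine ⟨∑ s ∈ p.support.filter (fun s => s 1 = 0), coeff s p,
      ∑ s ∈ p.support.filter (fun s => ¬ s 1 = 0), coeff s p, ?_, ?_⟩
  · conv_lhs => rw [as_sum p]
    rw [map_sum]
    rw [Finset.sum_congr rfl fun s hs => mono_red m t ht i s (hdeg s hs) (coeff s p)]
    rw [Finset.sum_ite, Finset.sum_smul, Finset.sum_smul]
  · intro hit
    apply Finset.sum_eq_zero
    intro s hs
    rw [Finset.mem_filter] at hs
    exfalso
    have := hdeg s hs.1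
    have h1 : 1 ≤ s 1 := by omega
    have : t ≤ s 1 * t := Nat.le_mul_of_pos_left _ (by omega)
    omega



end ConnectedSumAux

open ConnectedSumAux

/-- (Proposition: Lefschetz properties of the connected sum
`C = A #_T B ≅ F[z₁,z₂]/(z₁^{m−t}, z₁ᵗz₂ − z₂²)` of `A = F[x]/(xᵐ)` and
`B = F[y]/(yᵐ)` over `T = F[z]/(zᵗ)`, where `deg z₁ = 1` and `deg z₂ = t`):
`C` has the WLP iff `t ≠ m/2`, and `C` never has the SLP. -/
theorem connectedSum_wlp_iff_not_slp
    (F : Type) [Field F] {m t : ℕ} (ht : 1 < t) (htm : t < m)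
    (hchar : CharZero F ∨ m - 1 < ringChar F)
    (I : Ideal (MvPolynomial (Fin 2) F))
    (hI : I = Ideal.span
      {(X 0 : MvPolynomial (Fin 2) F) ^ (m - t),
        (X 0 : MvPolynomial (Fin 2) F) ^ t * X 1 - X 1 ^ 2})
    (𝒞 : ℕ → Submodule F (MvPolynomial (Fin 2) F ⧸ I))
    (h𝒞 : ∀ i, 𝒞 i =
      (weightedHomogeneousSubmodule F (![1, t] : Fin 2 → ℕ) i).map
        (Ideal.Quotient.mkₐ F I).toLinearMap) :
    (WLPFor 𝒞 ↔ m ≠ 2 * t) ∧ ¬ SLPFor 𝒞 := by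
  subst hI
  have ht1 : 1 ≤ t := le_of_lt ht
  have htm' : t ≤ m := le_of_lt htm
  -- membership of the monomial basis in the graded pieces
  have hmem_u : ∀ i : ℕ,
      Ideal.Quotient.mk (Jd m t F) ((X 0 : MvPolynomial (Fin 2) F) ^ i) ∈ 𝒞 i := by
    intro i
    rw [h𝒞]
    refine Submodule.mem_map.mpr ⟨X 0 ^ i, ?_, ?_⟩
    · rw [mem_weightedHomogeneousSubmodule, X0_pow_eq]
      exact isWeightedHomogeneous_monomial _ _ _ (by rw [wt]; simp [Finsupp.single_apply])
    · simp [Ideal.Quotient.mkₐ_eq_mk]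
  have hmem_v : ∀ i : ℕ, t ≤ i →
      Ideal.Quotient.mk (Jd m t F) ((X 0 : MvPolynomial (Fin 2) F) ^ (i - t) * X 1) ∈ 𝒞 i := by
    intro i hti
    rw [h𝒞]
    refine Submodule.mem_map.mpr ⟨X 0 ^ (i - t) * X 1, ?_, ?_⟩
    · rw [mem_weightedHomogeneousSubmodule, X0_pow_X1_eq]
      refine isWeightedHomogeneous_monomial _ _ _ ?_
      rw [wt, pair_apply0, pair_apply1]
      omega
    · simp [Ideal.Quotient.mkₐ_eq_mk]
  -- every element of a graded piece has a normal form
  have helim : ∀ (i : ℕ) (x : MvPolynomial (Fin 2) F ⧸ Jd m t F), x ∈ 𝒞 i →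
      ∃ c d : F, x = c • Ideal.Quotient.mk (Jd m t F) ((X 0 : MvPolynomial (Fin 2) F) ^ i) +
        d • Ideal.Quotient.mk (Jd m t F) ((X 0 : MvPolynomial (Fin 2) F) ^ (i - t) * X 1) ∧
        (i < t → d = 0) := by
    intro i x hx
    rw [h𝒞] at hx
    obtain ⟨p, hp, hpx⟩ := Submodule.mem_map.mp hx
    obtain ⟨c, d, hcd, hd⟩ := reduce m t ht1 i p
      ((mem_weightedHomogeneousSubmodule _ _ _ _).mp hp)
    refine ⟨c, d, ?_, hd⟩
    rw [← hpx]
    simpa [Ideal.Quotient.mkₐ_eq_mk] using hcd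
  -- independence of the normal forms
  have hindep : ∀ (j : ℕ) (c d : F), j < m →
      c • Ideal.Quotient.mk (Jd m t F) ((X 0 : MvPolynomial (Fin 2) F) ^ j) +
        d • Ideal.Quotient.mk (Jd m t F) ((X 0 : MvPolynomial (Fin 2) F) ^ (j - t) * X 1) = 0 →
      (j < m - t → c = 0) ∧ (t ≤ j → d = 0) := by
    intro j c d hj h0
    apply poly_indep m t ht1 htm' hj
    rw [← Ideal.Quotient.eq_zero_iff_mem, map_add, mk_smul, mk_smul]
    exact h0
  have hu0 : ∀ i : ℕ, m - t ≤ i →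
      Ideal.Quotient.mk (Jd m t F) ((X 0 : MvPolynomial (Fin 2) F) ^ i) = 0 :=
    fun i h => Ideal.Quotient.eq_zero_iff_mem.mpr (pow_mem m t h)
  have hmulu : ∀ i : ℕ, Ideal.Quotient.mk (Jd m t F) (X 0 : MvPolynomial (Fin 2) F) *
      Ideal.Quotient.mk (Jd m t F) ((X 0 : MvPolynomial (Fin 2) F) ^ i) =
      Ideal.Quotient.mk (Jd m t F) ((X 0 : MvPolynomial (Fin 2) F) ^ (i + 1)) := by
    intro i
    rw [← map_mul]
    congr 1
    rw [pow_succ]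
    ring
  have hmulv : ∀ i : ℕ, t ≤ i → Ideal.Quotient.mk (Jd m t F) (X 0 : MvPolynomial (Fin 2) F) *
      Ideal.Quotient.mk (Jd m t F) ((X 0 : MvPolynomial (Fin 2) F) ^ (i - t) * X 1) =
      Ideal.Quotient.mk (Jd m t F) ((X 0 : MvPolynomial (Fin 2) F) ^ ((i + 1) - t) * X 1) := by
    intro i hti
    rw [← map_mul]
    congr 1
    rw [show (i + 1) - t = (i - t) + 1 from by omega, pow_succ]
    ring
  -- every element of 𝒞 1 is a scalar multiple of z₁
  have hell : ∀ ℓ ∈ 𝒞 1, ∃ c : F,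
      ℓ = c • Ideal.Quotient.mk (Jd m t F) (X 0 : MvPolynomial (Fin 2) F) := by
    intro ℓ hℓ
    obtain ⟨c, d, hcd, hd⟩ := helim 1 ℓ hℓ
    refine ⟨c, ?_⟩
    rw [hcd, hd ht, zero_smul, add_zero, pow_one]
  refine ⟨⟨?_, ?_⟩, ?_⟩
  · -- WLP → m ≠ 2t
    rintro ⟨ℓ, hℓ1, hprop⟩ heq
    obtain ⟨c, rfl⟩ := hell ℓ hℓ1
    rcases hprop (t - 1) with hinj | hsurj
    · have h0 : (c • Ideal.Quotient.mk (Jd m t F) (X 0 : MvPolynomial (Fin 2) F)) *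
          Ideal.Quotient.mk (Jd m t F) ((X 0 : MvPolynomial (Fin 2) F) ^ (t - 1)) =
          (c • Ideal.Quotient.mk (Jd m t F) (X 0 : MvPolynomial (Fin 2) F)) * 0 := by
        rw [mul_zero, smul_mul_assoc, hmulu (t - 1), show t - 1 + 1 = t from by omega,
          hu0 t (by omega), smul_zero]
      have hz := hinj _ (hmem_u (t - 1)) 0 (Submodule.zero_mem _) h0
      have h2 := hindep (t - 1) 1 0 (by omega)
        (by rw [one_smul, zero_smul, add_zero]; exact hz)
      exact one_ne_zero (h2.1 (by omega))
    · have hvmem : Ideal.Quotient.mk (Jd m t F)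
          ((X 0 : MvPolynomial (Fin 2) F) ^ (t - t) * X 1) ∈ 𝒞 (t - 1 + 1) := by
        rw [show t - 1 + 1 = t from by omega]
        exact hmem_v t le_rfl
      obtain ⟨x, hx, hlx⟩ := hsurj _ hvmem
      obtain ⟨c', d', rfl, hd'⟩ := helim (t - 1) x hx
      rw [hd' (by omega), zero_smul, add_zero, smul_mul_assoc, mul_smul_comm,
        hmulu (t - 1), show t - 1 + 1 = t from by omega, hu0 t (by omega),
        smul_zero, smul_zero] at hlx
      have h2 := hindep t 0 1 htm
        (by rw [zero_smul, one_smul, zero_add]; exact hlx.symm)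
      exact one_ne_zero (h2.2 le_rfl)
  · -- m ≠ 2t → WLP
    intro hne
    refine ⟨Ideal.Quotient.mk (Jd m t F) (X 0 : MvPolynomial (Fin 2) F),
      by simpa using hmem_u 1, ?_⟩
    intro i
    by_cases hi : i = t - 1
    · left
      subst hi
      intro x hx y hy hxy
      obtain ⟨c1, d1, rfl, hd1⟩ := helim (t - 1) x hx
      obtain ⟨c2, d2, rfl, hd2⟩ := helim (t - 1) y hy
      rw [hd1 (by omega), zero_smul, add_zero]
      rw [hd2 (by omega), zero_smul, add_zero]
      rw [hd1 (by omega), zero_smul, add_zero, hd2 (by omega), zero_smul, add_zero] at hxy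
      by_cases hc : m - t ≤ t - 1
      · rw [hu0 (t - 1) hc, smul_zero, smul_zero]
      · rw [mul_smul_comm, mul_smul_comm, hmulu (t - 1),
          show t - 1 + 1 = t from by omega] at hxy
        have hsub : (c1 - c2) • Ideal.Quotient.mk (Jd m t F)
            ((X 0 : MvPolynomial (Fin 2) F) ^ t) = 0 := by
          rw [sub_smul, hxy, sub_self]
        have h2 := hindep t (c1 - c2) 0 htm (by rw [zero_smul, add_zero]; exact hsub)
        have hc0 : c1 - c2 = 0 := h2.1 (by omega)
        rw [sub_eq_zero] at hc0
        rw [hc0]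
    · right
      intro z hz
      obtain ⟨c, d, rfl, hd⟩ := helim (i + 1) z hz
      by_cases hit : i + 1 < t
      · refine ⟨c • Ideal.Quotient.mk (Jd m t F) ((X 0 : MvPolynomial (Fin 2) F) ^ i),
          Submodule.smul_mem _ _ (hmem_u i), ?_⟩
        rw [hd hit, zero_smul, add_zero, mul_smul_comm, hmulu i]
      · have hti : t ≤ i := by omega
        refine ⟨c • Ideal.Quotient.mk (Jd m t F) ((X 0 : MvPolynomial (Fin 2) F) ^ i) +
            d • Ideal.Quotient.mk (Jd m t F) ((X 0 : MvPolynomial (Fin 2) F) ^ (i - t) * X 1),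
          Submodule.add_mem _ (Submodule.smul_mem _ _ (hmem_u i))
            (Submodule.smul_mem _ _ (hmem_v i hti)), ?_⟩
        rw [mul_add, mul_smul_comm, mul_smul_comm, hmulu i, hmulv i hti]
  · -- ¬ SLP
    rintro ⟨ℓ, hℓ1, hprop⟩
    obtain ⟨c, rfl⟩ := hell ℓ hℓ1
    have hpow : (c • Ideal.Quotient.mk (Jd m t F) (X 0 : MvPolynomial (Fin 2) F)) ^ (m - 1)
        = 0 := by
      rw [smul_pow, ← map_pow, hu0 (m - 1) (by omega), smul_zero]
    rcases hprop 0 (m - 1) with hinj | hsurj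
    · have h0 : (c • Ideal.Quotient.mk (Jd m t F) (X 0 : MvPolynomial (Fin 2) F)) ^ (m - 1) *
          Ideal.Quotient.mk (Jd m t F) ((X 0 : MvPolynomial (Fin 2) F) ^ 0) =
          (c • Ideal.Quotient.mk (Jd m t F) (X 0 : MvPolynomial (Fin 2) F)) ^ (m - 1) * 0 := by
        rw [hpow, zero_mul, zero_mul]
      have hz := hinj _ (hmem_u 0) 0 (Submodule.zero_mem _) h0
      have h2 := hindep 0 1 0 (by omega)
        (by rw [one_smul, zero_smul, add_zero]; exact hz)
      exact one_ne_zero (h2.1 (by omega))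
    · have hvmem : Ideal.Quotient.mk (Jd m t F)
          ((X 0 : MvPolynomial (Fin 2) F) ^ ((m - 1) - t) * X 1) ∈ 𝒞 (0 + (m - 1)) := by
        rw [zero_add]
        exact hmem_v (m - 1) (by omega)
      obtain ⟨x, hx, hlx⟩ := hsurj _ hvmem
      rw [hpow, zero_mul] at hlx
      have h2 := hindep (m - 1) 0 1 (by omega)
        (by rw [zero_smul, one_smul, zero_add]; exact hlx.symm)
      exact one_ne_zero (h2.2 (by omega))
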